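/- In the ring R = ℤ[ζ] with ζ a primitive p²-nd root of unity, the element x = Σ_{i=0}^{p-1} [ζ^i] ∈ W(R) (a sum of Teichmüller elements) satisfies F(x) = V(1), where F is the Witt vector Frobenius and V the Verschiebung. -/

import Mathlib

theorem stmt_15 (p : ℕ) [Fact p.Prime] (R : Type*) [CommRing R] [IsDomain R]
    [CharZero R] (ζ : R) (hζ : IsPrimitiveRoot ζ (p ^ 2))
    (hadj : Algebra.adjoin ℤ {ζ} = ⊤) :
    WittVector.frobenius (∑ i ∈ Finset.range p, WittVector.teichmuller p (ζ ^ i)) =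
      WittVector.verschiebung (1 : WittVector p R) := by
  classical
  have hp := (Fact.out : p.Prime)
  set K := FractionRing R
  have hinj : Function.Injective (algebraMap R K) := IsFractionRing.injective R K
  apply WittVector.map_injective (algebraMap R K) hinj
  have hmapF :
      WittVector.map (algebraMap R K)
          (WittVector.frobenius (∑ i ∈ Finset.range p, WittVector.teichmuller p (ζ ^ i))) =
        WittVector.frobenius (WittVector.map (algebraMap R K)
          (∑ i ∈ Finset.range p, WittVector.teichmuller p (ζ ^ i))) :=
    (WittVector.frobenius_isPoly p).map (algebraMap R K) _
  rw [hmapF, WittVector.map_verschiebung, RingHom.map_one]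
  rw [map_sum]
  simp only [WittVector.map_teichmuller]
  set ζ' : K := algebraMap R K ζ with hζ'def
  have hζ' : IsPrimitiveRoot ζ' (p ^ 2) := hζ.map_of_injective hinj
  have hpK : Invertible (p : K) := invertibleOfNonzero (by exact_mod_cast hp.ne_zero)
  apply (WittVector.ghostMap.bijective_of_invertible p K).1
  funext n
  simp only [WittVector.ghostMap_apply]
  rw [WittVector.ghostComponent_frobenius]
  rw [map_sum]
  simp only [WittVector.ghostComponent_teichmuller, map_pow]
  cases n with
  | zero =>
    rw [WittVector.ghostComponent_zero_verschiebung]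
    have hprim : IsPrimitiveRoot (ζ' ^ p) p :=
      hζ'.pow (pow_pos hp.pos 2) (sq p)
    simp only [zero_add, pow_one]
    exact hprim.geom_sum_eq_zero hp.one_lt
  | succ n =>
    rw [WittVector.ghostComponent_verschiebung, map_one, mul_one]
    have hone : ζ' ^ p ^ 2 = 1 := hζ'.pow_eq_one
    have hbase : ζ' ^ p ^ (n + 1 + 1) = 1 := by
      have : p ^ (n + 1 + 1) = p ^ 2 * p ^ n := by ring
      rw [this, pow_mul, hone, one_pow]
    simp [← hζ'def, hbase]
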